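/- Let w ∈ ℝ_+^d and suppose a constrained homogeneous random walk satisfies ∑_{Δ} (w^T Δ) p(Λ,Δ) ≤ -γ for all nonempty faces Λ, with increments Δ bounded in max-norm by 1. Then there exists δ > 0 such that Φ_g(q) = exp(δ w^T q) satisfies E[Φ_g(Q(t+1)) | Q(t) = q] ≤ γ_g Φ_g(q) for all q ≠ 0, for some γ_g < 1. That is, a linear Lyapunov function yields a geometric Lyapunov function. -/

import Mathlib

lemma exp_le_quad {t : ℝ} (ht : |t| ≤ 1) : Real.exp t ≤ 1 + t + t ^ 2 := by
  have h := Real.exp_bound ht (n := 2) (by norm_num)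
  have hs : ∑ m ∈ Finset.range 2, t ^ m / m.factorial = 1 + t := by
    simp [Finset.sum_range_succ]
  rw [hs] at h
  have h1 := (abs_sub_le_iff.1 h).1
  have h2 : |t| ^ 2 = t ^ 2 := by rw [sq_abs]
  norm_num [Nat.factorial] at h1
  nlinarith [sq_nonneg t]

/-- A linear Lyapunov function yields a geometric Lyapunov function
    Φ_g(q) = exp(δ wᵀ q) for sufficiently small δ > 0. -/
theorem stmt_12 (d : ℕ) (hd : 0 < d)
    (p : Set (Fin d) → (Fin d → ℤ) → ℝ)
    (hnn : ∀ Λ Δ, 0 ≤ p Λ Δ)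
    (hbdd : ∀ Λ Δ, p Λ Δ ≠ 0 → ∀ i, |Δ i| ≤ 1)
    (hsum : ∀ Λ, ∑' Δ : Fin d → ℤ, p Λ Δ = 1)
    (hcons : ∀ Λ Δ, (∃ i, i ∉ Λ ∧ Δ i = -1) → p Λ Δ = 0)
    (w : Fin d → ℝ) (hw : ∀ i, 0 ≤ w i) (γ : ℝ) (hγ : 0 < γ)
    (hdrift : ∀ Λ : Set (Fin d), Λ.Nonempty →
      ∑' Δ : Fin d → ℤ, (∑ i, w i * (Δ i : ℝ)) * p Λ Δ ≤ -γ) :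
    ∃ δ > 0, ∃ γg : ℝ, γg < 1 ∧
      ∀ q : Fin d → ℕ, q ≠ 0 →
        (∑' Δ : Fin d → ℤ,
            p {i | 0 < q i} Δ * Real.exp (δ * ∑ i, w i * ((q i : ℝ) + (Δ i : ℝ))))
          ≤ γg * Real.exp (δ * ∑ i, w i * (q i : ℝ)) := by
  classical
  set M : ℝ := ∑ i, w i with hMdef
  have hM0 : 0 ≤ M := Finset.sum_nonneg fun i _ => hw i
  set δ : ℝ := min (1 / (M + 1)) (γ / (2 * (M ^ 2 + 1))) with hδdef
  have hδpos : 0 < δ := lt_min (by positivity) (by positivity)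
  have hδ1 : δ ≤ 1 / (M + 1) := min_le_left _ _
  have hδ2 : δ ≤ γ / (2 * (M ^ 2 + 1)) := min_le_right _ _
  have hδM2 : δ * M ^ 2 < γ := by
    have h : δ * (2 * (M ^ 2 + 1)) ≤ γ := by
      rw [le_div_iff₀ (by positivity)] at hδ2
      exact hδ2
    nlinarith [sq_nonneg M]
  refine ⟨δ, hδpos, 1 - δ * γ + δ ^ 2 * M ^ 2, by nlinarith, ?_⟩
  intro q hq
  set Λ : Set (Fin d) := {i | 0 < q i} with hΛdef
  have hΛ : Λ.Nonempty := by
    obtain ⟨i, hi⟩ := Function.ne_iff.mp hq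
    exact ⟨i, Nat.pos_of_ne_zero hi⟩
  set S : Finset (Fin d → ℤ) := Fintype.piFinset fun _ => Finset.Icc (-1 : ℤ) 1 with hSdef
  have hmemS : ∀ Δ : Fin d → ℤ, p Λ Δ ≠ 0 → Δ ∈ S := by
    intro Δ hΔ
    rw [Fintype.mem_piFinset]
    intro i
    rw [Finset.mem_Icc, ← abs_le]
    exact hbdd Λ Δ hΔ i
  have hXbdd : ∀ Δ ∈ S, |∑ i, w i * (Δ i : ℝ)| ≤ M := by
    intro Δ hΔ
    refine (Finset.abs_sum_le_sum_abs _ _).trans ?_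
    apply Finset.sum_le_sum
    intro i _
    rw [abs_mul, abs_of_nonneg (hw i)]
    have : |Δ i| ≤ 1 := by
      rw [abs_le, ← Finset.mem_Icc]
      exact Fintype.mem_piFinset.mp hΔ i
    have h1 : |(Δ i : ℝ)| ≤ 1 := by
      rw [← Int.cast_abs]; exact_mod_cast this
    nlinarith [abs_nonneg ((Δ i : ℝ)), hw i]
  -- finite versions of hsum and hdrift
  have hsumS : ∑ Δ ∈ S, p Λ Δ = 1 := by
    rw [← hsum Λ]
    exact (tsum_eq_sum fun Δ hΔ => by
      by_contra h; exact hΔ (hmemS Δ h)).symm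
  have hdriftS : ∑ Δ ∈ S, (∑ i, w i * (Δ i : ℝ)) * p Λ Δ ≤ -γ := by
    rw [← tsum_eq_sum (L := SummationFilter.unconditional _) (f := fun Δ => (∑ i, w i * (Δ i : ℝ)) * p Λ Δ)
      (fun Δ hΔ => by
        by_cases h : p Λ Δ = 0
        · exact mul_eq_zero_of_right _ h
        · exact absurd (hmemS Δ h) hΔ)]
    exact hdrift Λ hΛ
  -- rewrite LHS tsum as finite sum and split exp
  have hLHS : (∑' Δ : Fin d → ℤ,
      p Λ Δ * Real.exp (δ * ∑ i, w i * ((q i : ℝ) + (Δ i : ℝ))))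
      = Real.exp (δ * ∑ i, w i * (q i : ℝ)) *
        ∑ Δ ∈ S, p Λ Δ * Real.exp (δ * ∑ i, w i * (Δ i : ℝ)) := by
    rw [tsum_eq_sum (s := S) (fun Δ hΔ => by
      by_cases h : p Λ Δ = 0
      · rw [h, zero_mul]
      · exact absurd (hmemS Δ h) hΔ)]
    rw [Finset.mul_sum]
    apply Finset.sum_congr rfl
    intro Δ _
    have : δ * ∑ i, w i * ((q i : ℝ) + (Δ i : ℝ))
        = δ * ∑ i, w i * (q i : ℝ) + δ * ∑ i, w i * (Δ i : ℝ) := by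
      rw [← mul_add, ← Finset.sum_add_distrib]
      congr 1
      apply Finset.sum_congr rfl
      intro i _
      ring
    rw [this, Real.exp_add]
    ring
  rw [hLHS, mul_comm ((1 : ℝ) - δ * γ + δ ^ 2 * M ^ 2) _]
  apply mul_le_mul_of_nonneg_left _ (Real.exp_pos _).le
  -- main estimate
  calc ∑ Δ ∈ S, p Λ Δ * Real.exp (δ * ∑ i, w i * (Δ i : ℝ))
      ≤ ∑ Δ ∈ S, p Λ Δ * (1 + δ * (∑ i, w i * (Δ i : ℝ))
          + (δ * ∑ i, w i * (Δ i : ℝ)) ^ 2) := by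
        apply Finset.sum_le_sum
        intro Δ hΔ
        apply mul_le_mul_of_nonneg_left _ (hnn Λ Δ)
        apply exp_le_quad
        rw [abs_mul, abs_of_nonneg hδpos.le]
        calc δ * |∑ i, w i * (Δ i : ℝ)| ≤ (1 / (M + 1)) * M := by
              apply mul_le_mul hδ1 (hXbdd Δ hΔ) (abs_nonneg _) (by positivity)
          _ ≤ 1 := by
              rw [div_mul_eq_mul_div, div_le_one (by positivity)]
              linarith
    _ = (∑ Δ ∈ S, p Λ Δ) + δ * (∑ Δ ∈ S, (∑ i, w i * (Δ i : ℝ)) * p Λ Δ)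
        + δ ^ 2 * ∑ Δ ∈ S, (∑ i, w i * (Δ i : ℝ)) ^ 2 * p Λ Δ := by
        rw [Finset.mul_sum, Finset.mul_sum, ← Finset.sum_add_distrib,
          ← Finset.sum_add_distrib]
        apply Finset.sum_congr rfl
        intro Δ _
        ring
    _ ≤ 1 + δ * (-γ) + δ ^ 2 * (M ^ 2 * 1) := by
        have h1 : δ * (∑ Δ ∈ S, (∑ i, w i * (Δ i : ℝ)) * p Λ Δ) ≤ δ * (-γ) :=
          mul_le_mul_of_nonneg_left hdriftS hδpos.le
        have h2 : ∑ Δ ∈ S, (∑ i, w i * (Δ i : ℝ)) ^ 2 * p Λ Δ ≤ M ^ 2 * 1 := by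
          rw [← hsumS, Finset.mul_sum]
          apply Finset.sum_le_sum
          intro Δ hΔ
          apply mul_le_mul_of_nonneg_right _ (hnn Λ Δ)
          have := hXbdd Δ hΔ
          nlinarith [abs_nonneg (∑ i, w i * (Δ i : ℝ)), sq_abs (∑ i, w i * (Δ i : ℝ))]
        have h3 : δ ^ 2 * (∑ Δ ∈ S, (∑ i, w i * (Δ i : ℝ)) ^ 2 * p Λ Δ)
            ≤ δ ^ 2 * (M ^ 2 * 1) := mul_le_mul_of_nonneg_left h2 (sq_nonneg δ)
        rw [hsumS]
        linarith
    _ = 1 - δ * γ + δ ^ 2 * M ^ 2 := by ring
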